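/- Let p ∈ (1,∞), let A ⊆ L(L^p(μ)) be an algebra with isometric automorphism φ_A. For a ∈ A define on L^p(ν × μ) (ν counting measure on ℤ_{≥0}): c_A(a)(x⊗ξ) = Σ_{n≥1}(sx)(n)δ_n ⊗ φ_A^{n−1}(a)ξ and v_A(a)(x⊗ξ) = Σ_{n≥0}(tx)(n)δ_n ⊗ φ_A^n(a)ξ, where s is right translation and t is left translation on ℓ^p(ℤ_{≥0}). Then for all a, b ∈ A: (1) c_A(ab) = c_A(a)φ_A^∞(b) and c_A(φ_A(a)b) = φ_A^∞(a)c_A(b); (2) v_A(ab) = φ_A^∞(a)v_A(b) and v_A(aφ_A(b)) = v_A(a)φ_A^∞(b); (3) v_A(a)c_A(b) = φ_A^∞(ab). -/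
import Mathlib


open MeasureTheory
open scoped ENNReal

/-- On `L^p(ν × μ) = ℓ^p(ℤ_{≥0}) ⊗_p L^p(μ)` (realized as the
`p`-direct sum of copies of `L^p(μ)`), let `φ_A^∞(a)`, the creation operators `c_A(a)`
and the annihilation operators `v_A(a)` be given componentwise by
`(φ_A^∞(a)ξ)_n = φ_A^n(a)(ξ_n)`, `(c_A(a)ξ)_0 = 0`, `(c_A(a)ξ)_{n+1} = φ_A^n(a)(ξ_n)`,
`(v_A(a)ξ)_n = φ_A^n(a)(ξ_{n+1})`.  Then for `a, b ∈ A`: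
(1) `c_A(ab) = c_A(a)φ_A^∞(b)` and `c_A(φ_A(a)b) = φ_A^∞(a)c_A(b)`;
(2) `v_A(ab) = φ_A^∞(a)v_A(b)` and `v_A(aφ_A(b)) = v_A(a)φ_A^∞(b)`;
(3) `v_A(a)c_A(b) = φ_A^∞(ab)`. -/
theorem creation_annihilation_module_relations
    {Ω : Type*} [MeasurableSpace Ω] (μ : Measure Ω)
    (p : ℝ≥0∞) [Fact (1 ≤ p)] (hp : 1 < p) (hp' : p ≠ ∞)
    (A : Set (Lp ℂ p μ →L[ℂ] Lp ℂ p μ))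
    (hAadd : ∀ a ∈ A, ∀ b ∈ A, a + b ∈ A)
    (hAmul : ∀ a ∈ A, ∀ b ∈ A, a * b ∈ A)
    (φ ψ : (Lp ℂ p μ →L[ℂ] Lp ℂ p μ) → (Lp ℂ p μ →L[ℂ] Lp ℂ p μ))
    (hφA : ∀ a ∈ A, φ a ∈ A) (hψA : ∀ a ∈ A, ψ a ∈ A)
    (hφ_iso : ∀ a ∈ A, ‖φ a‖ = ‖a‖)
    (hφψ : ∀ a ∈ A, φ (ψ a) = a) (hψφ : ∀ a ∈ A, ψ (φ a) = a)
    (hφ_mul : ∀ a ∈ A, ∀ b ∈ A, φ (a * b) = φ a * φ b)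
    (Φ C V : (Lp ℂ p μ →L[ℂ] Lp ℂ p μ) →
        (lp (fun _ : ℕ => Lp ℂ p μ) p →L[ℂ] lp (fun _ : ℕ => Lp ℂ p μ) p))
    (hΦ : ∀ a ∈ A, ∀ (ξ : lp (fun _ : ℕ => Lp ℂ p μ) p) (n : ℕ),
      (Φ a ξ) n = (φ^[n] a) (ξ n))
    (hCzero : ∀ a ∈ A, ∀ ξ : lp (fun _ : ℕ => Lp ℂ p μ) p, (C a ξ) 0 = 0)
    (hCsucc : ∀ a ∈ A, ∀ (ξ : lp (fun _ : ℕ => Lp ℂ p μ) p) (n : ℕ),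
      (C a ξ) (n + 1) = (φ^[n] a) (ξ n))
    (hVf : ∀ a ∈ A, ∀ (ξ : lp (fun _ : ℕ => Lp ℂ p μ) p) (n : ℕ),
      (V a ξ) n = (φ^[n] a) (ξ (n + 1))) :
    (∀ a ∈ A, ∀ b ∈ A,
        C (a * b) = C a ∘L Φ b ∧ C (φ a * b) = Φ a ∘L C b) ∧
    (∀ a ∈ A, ∀ b ∈ A,
        V (a * b) = Φ a ∘L V b ∧ V (a * φ b) = V a ∘L Φ b) ∧
    (∀ a ∈ A, ∀ b ∈ A, V a ∘L C b = Φ (a * b)) := by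

  -- iterates stay in A
  have hiterA : ∀ n, ∀ a ∈ A, φ^[n] a ∈ A := by
    intro n
    induction n with
    | zero => intro a ha; simpa using ha
    | succ n ih =>
        intro a ha
        rw [Function.iterate_succ_apply']
        exact hφA _ (ih a ha)
  -- iterates are multiplicative on A
  have hiter_mul : ∀ n, ∀ a ∈ A, ∀ b ∈ A, φ^[n] (a * b) = φ^[n] a * φ^[n] b := by
    intro n
    induction n with
    | zero => intro a _ b _; simp
    | succ n ih =>
        intro a ha b hb
        rw [Function.iterate_succ_apply', Function.iterate_succ_apply',
          Function.iterate_succ_apply', ih a ha b hb,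
          hφ_mul _ (hiterA n a ha) _ (hiterA n b hb)]
  refine ⟨?_, ?_, ?_⟩
  · intro a ha b hb
    constructor
    · ext ξ n
      cases n with
      | zero => simp [hCzero _ (hAmul a ha b hb), hCzero _ ha]
      | succ n =>
          simp only [ContinuousLinearMap.comp_apply]
          rw [hCsucc _ (hAmul a ha b hb), hCsucc _ ha, hΦ _ hb,
            hiter_mul n a ha b hb]
          rfl
    · have hab : φ a * b ∈ A := hAmul _ (hφA a ha) b hb
      ext ξ n
      cases n with
      | zero =>
          simp only [ContinuousLinearMap.comp_apply]
          rw [hCzero _ hab, hΦ _ ha, hCzero _ hb]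
          simp
      | succ n =>
          simp only [ContinuousLinearMap.comp_apply]
          rw [hCsucc _ hab, hΦ _ ha, hCsucc _ hb,
            hiter_mul n _ (hφA a ha) b hb]
          simp only [ContinuousLinearMap.mul_apply, Function.iterate_succ_apply]
          exact Filter.EventuallyEq.rfl
  · intro a ha b hb
    constructor
    · ext ξ n
      simp only [ContinuousLinearMap.comp_apply]
      rw [hVf _ (hAmul a ha b hb), hΦ _ ha, hVf _ hb, hiter_mul n a ha b hb]
      rfl
    · have hab : a * φ b ∈ A := hAmul a ha _ (hφA b hb)
      ext ξ n
      simp only [ContinuousLinearMap.comp_apply]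
      rw [hVf _ hab, hVf _ ha, hΦ _ hb, hiter_mul n a ha _ (hφA b hb)]
      simp only [ContinuousLinearMap.mul_apply, Function.iterate_succ_apply]
      exact Filter.EventuallyEq.rfl
  · intro a ha b hb
    ext ξ n
    simp only [ContinuousLinearMap.comp_apply]
    rw [hΦ _ (hAmul a ha b hb), hVf _ ha, hCsucc _ hb, hiter_mul n a ha b hb]
    rfl
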